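/- For every x > b, g(x)·Φ'(x) − (λ+δ)·Φ(x) + λ·∫₀ˣ Φ(x−y)·α·e^{−αy} dy ≤ 0. -/

import Mathlib

open Set MeasureTheory

lemma exp_integral (al t : ℝ) :
    ∫ y in (0:ℝ)..t, al * Real.exp (-al * y) = 1 - Real.exp (-al * t) := by
  have hd : ∀ y : ℝ, HasDerivAt (fun y => -Real.exp (-al * y)) (al * Real.exp (-al * y)) y := by
    intro y
    have h1 : HasDerivAt (fun y : ℝ => -al * y) (-al) y := by
      simpa using (hasDerivAt_id y).const_mul (-al)
    have h2 : HasDerivAt (fun x => -Real.exp (-al * x)) (-(Real.exp (-al * y) * -al)) y := h1.exp.neg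
    convert h2 using 1
    ring
  rw [intervalIntegral.integral_eq_sub_of_hasDerivAt (fun y _ => hd y)
    ((by fun_prop : Continuous fun y : ℝ => al * Real.exp (-al * y)).intervalIntegrable 0 t)]
  norm_num
  ring

lemma conv_integrable (F : ℝ → ℝ) (hF : ContinuousOn F (Ici 0)) (al t : ℝ) (ht : 0 ≤ t) :
    IntervalIntegrable (fun y => F (t - y) * (al * Real.exp (-al * y))) volume 0 t := by
  apply ContinuousOn.intervalIntegrable
  apply ContinuousOn.mul
  · refine hF.comp ((continuous_const.sub continuous_id).continuousOn) ?_
    intro y hy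
    rw [uIcc_of_le ht] at hy
    simp only [mem_Ici]
    linarith [hy.1, hy.2]
  · exact (by fun_prop : Continuous fun y : ℝ => al * Real.exp (-al * y)).continuousOn


/-- For every x > b,
g(x)Φ'(x) − (λ+δ)Φ(x) + λ∫₀ˣ Φ(x−y)αe^{−αy}dy ≤ 0. -/
theorem stmt_14 (lam del al b : ℝ) (g g' ψ ψ' ψ'' Φ : ℝ → ℝ)
    (hlam : 0 < lam) (hdel : 0 < del) (hal : 0 < al)
    (hg : ∀ x ≥ (0:ℝ), HasDerivAt g (g' x) x)
    (hg'c : ContinuousOn g' (Set.Ici 0))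
    (hgpos : ∀ x ≥ (0:ℝ), 0 ≤ g x)
    (hψd : ∀ x ≥ (0:ℝ), HasDerivAt ψ (ψ' x) x)
    (hψd2 : ∀ x ≥ (0:ℝ), HasDerivAt ψ' (ψ'' x) x)
    (hψ''c : ContinuousOn ψ'' (Set.Ici 0))
    (hψmono : StrictMonoOn ψ (Set.Ici 0))
    (hψ0 : 0 ≤ ψ 0)
    (hψeq : ∀ x > (0:ℝ),
      g x * ψ' x - (lam + del) * ψ x
        + lam * ∫ y in (0:ℝ)..x, ψ (x - y) * (al * Real.exp (-al * y)) = 0)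
    (hb : 0 < b)
    (hbmin : ∀ x ≥ (0:ℝ), ψ' b ≤ ψ' x)
    (hψ'' : ∀ x > b, 0 ≤ ψ'' x)
    (hΦ : ∀ x, Φ x = if x ≤ b then ψ x / ψ' b else x - b + ψ b / ψ' b) :
    ∀ x > b,
      g x * deriv Φ x - (lam + del) * Φ x
        + lam * ∫ y in (0:ℝ)..x, Φ (x - y) * (al * Real.exp (-al * y)) ≤ 0 := by
  intro x hx
  have hb0 : (0:ℝ) ≤ b := hb.le
  have hx0 : (0:ℝ) < x := lt_trans hb hx
  have hψc : ContinuousOn ψ (Ici 0) := fun z hz => ((hψd z hz).continuousAt).continuousWithinAt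
  have hψ'c : ContinuousOn ψ' (Ici 0) := fun z hz => ((hψd2 z hz).continuousAt).continuousWithinAt
  have hψle : MonotoneOn ψ (Ici 0) := hψmono.monotoneOn
  -- ψ b > 0
  have hψbpos : 0 < ψ b := by
    have := hψmono (self_mem_Ici) (mem_Ici.mpr hb0) hb
    linarith
  -- ψ' b > 0
  have hc : 0 < ψ' b := by
    have heqb := hψeq b hb
    have hJb : (∫ y in (0:ℝ)..b, ψ (b - y) * (al * Real.exp (-al * y)))
        ≤ ψ b * (1 - Real.exp (-al * b)) := by
      have h1 : (∫ y in (0:ℝ)..b, ψ (b - y) * (al * Real.exp (-al * y)))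
          ≤ ∫ y in (0:ℝ)..b, ψ b * (al * Real.exp (-al * y)) := by
        apply intervalIntegral.integral_mono_on hb0 (conv_integrable ψ hψc al b hb0)
          ((by fun_prop : Continuous fun y : ℝ => ψ b * (al * Real.exp (-al * y))).intervalIntegrable 0 b)
        intro y hy
        have hby : b - y ∈ Ici (0:ℝ) := by simp only [mem_Ici]; linarith [hy.2]
        have := hψle hby (mem_Ici.mpr hb0) (by linarith [hy.1])
        have hpos : 0 ≤ al * Real.exp (-al * y) := by positivity
        exact mul_le_mul_of_nonneg_right this hpos
      have h2 : (∫ y in (0:ℝ)..b, ψ b * (al * Real.exp (-al * y)))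
          = ψ b * (1 - Real.exp (-al * b)) := by
        rw [intervalIntegral.integral_const_mul, exp_integral]
      linarith
    nlinarith [mul_le_mul_of_nonneg_left hJb hlam.le,
      mul_pos (mul_pos hlam hψbpos) (Real.exp_pos (-al * b)),
      hgpos b hb0, mul_pos hdel hψbpos]
  have hcp : ψ' b ≤ ψ' x := hbmin x hx0.le
  have hp : 0 < ψ' x := lt_of_lt_of_le hc hcp
  -- ψ' monotone on [b, ∞)
  have hψ'mono : MonotoneOn ψ' (Ici b) := by
    apply monotoneOn_of_deriv_nonneg (convex_Ici b)
      (hψ'c.mono (fun z hz => le_trans hb0 hz))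
    · intro z hz
      rw [interior_Ici] at hz
      exact ((hψd2 z (by linarith [mem_Ioi.mp hz])).differentiableAt).differentiableWithinAt
    · intro z hz
      rw [interior_Ici] at hz
      rw [(hψd2 z (le_of_lt (lt_trans hb (mem_Ioi.mp hz)))).deriv]
      exact hψ'' z (mem_Ioi.mp hz)
  -- MVT estimate
  have hMVT : ∀ z, b ≤ z → z ≤ x → ψ x - ψ z ≤ ψ' x * (x - z) := by
    intro z hbz hzx
    rcases eq_or_lt_of_le hzx with h | h
    · rw [h]; simp
    · obtain ⟨ξ, hξ, hslope⟩ := exists_hasDerivAt_eq_slope ψ ψ' h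
        (hψc.mono (fun t ht => le_trans (le_trans hb0 hbz) ht.1))
        (fun t ht => hψd t (by linarith [ht.1, hb0]))
      rw [eq_div_iff (by linarith : x - z ≠ 0)] at hslope
      have hξx : ψ' ξ ≤ ψ' x := hψ'mono (mem_Ici.mpr (le_of_lt (lt_of_le_of_lt hbz hξ.1)))
        (mem_Ici.mpr (by linarith)) hξ.2.le
      nlinarith [hξ.1, hξ.2]
  set u := ψ b / ψ' b with hu_def
  have hu : u * ψ' b = ψ b := div_mul_cancel₀ _ hc.ne'
  have hupos : 0 < u := div_pos hψbpos hc
  have hΦx : Φ x = x - b + u := by rw [hΦ x, if_neg (not_le.mpr hx)]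
  -- W := ψ x - ψ' x * Φ x ≤ 0
  have hWneg : ψ x - ψ' x * Φ x ≤ 0 := by
    rw [hΦx]
    nlinarith [hMVT b le_rfl hx.le, mul_nonneg (sub_nonneg.mpr hcp) hupos.le]
  -- core pointwise inequality
  have hcore : ∀ z, 0 ≤ z → z ≤ x → ψ x - ψ' x * Φ x ≤ ψ z - ψ' x * Φ z := by
    intro z hz0 hzx
    rw [hΦx, hΦ z]
    by_cases hzb : z ≤ b
    · rw [if_pos hzb]
      set v := ψ z / ψ' b with hv_def
      have hv : v * ψ' b = ψ z := div_mul_cancel₀ _ hc.ne'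
      have hψzb : ψ z ≤ ψ b := hψle (mem_Ici.mpr hz0) (mem_Ici.mpr hb0) hzb
      have hvu : v ≤ u := (div_le_div_iff_of_pos_right hc).mpr hψzb
      have h1 := hMVT b le_rfl hx.le
      nlinarith [mul_nonneg (sub_nonneg.mpr hcp) (sub_nonneg.mpr hvu)]
    · rw [if_neg hzb]
      have := hMVT z (le_of_not_ge hzb) hzx
      nlinarith
  -- continuity of Φ
  have hΦc : ContinuousOn Φ (Ici 0) := by
    have hfun : Φ = fun z => if z ≤ b then ψ z / ψ' b else z - b + ψ b / ψ' b := funext hΦ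
    rw [hfun]
    apply ContinuousOn.if
    · intro a ha
      have hset : {a : ℝ | a ≤ b} = Iic b := rfl
      rw [hset, frontier_Iic] at ha
      have hab : a = b := ha.2
      rw [hab]
      simp
    · have hset : {a : ℝ | a ≤ b} = Iic b := rfl
      rw [hset, closure_Iic]
      exact (hψc.mono inter_subset_left).div_const _
    · have hset : {a : ℝ | ¬ a ≤ b} = Ioi b := by ext t; simp [not_le]
      rw [hset, closure_Ioi]
      exact (Continuous.continuousOn (by fun_prop))
  -- deriv Φ x = 1
  have hderiv : deriv Φ x = 1 := by
    have hev : Φ =ᶠ[nhds x] fun t => t - b + u := by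
      filter_upwards [eventually_gt_nhds hx] with t ht
      rw [hΦ t, if_neg (not_le.mpr ht)]
    rw [Filter.EventuallyEq.deriv_eq hev]
    exact (((hasDerivAt_id x).sub_const b).add_const u).deriv
  rw [hderiv]
  -- integrability
  have hintψ : IntervalIntegrable (fun y => ψ (x - y) * (al * Real.exp (-al * y))) volume 0 x :=
    conv_integrable ψ hψc al x hx0.le
  have hintΦ : IntervalIntegrable (fun y => Φ (x - y) * (al * Real.exp (-al * y))) volume 0 x :=
    conv_integrable Φ hΦc al x hx0.le
  set J := ∫ y in (0:ℝ)..x, ψ (x - y) * (al * Real.exp (-al * y)) with hJ_def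
  set I := ∫ y in (0:ℝ)..x, Φ (x - y) * (al * Real.exp (-al * y)) with hI_def
  -- J - ψ' x * I ≥ W
  have hsub : J - ψ' x * I
      = ∫ y in (0:ℝ)..x, (ψ (x - y) - ψ' x * Φ (x - y)) * (al * Real.exp (-al * y)) := by
    have hfun : (fun y => (ψ (x - y) - ψ' x * Φ (x - y)) * (al * Real.exp (-al * y)))
        = fun y => ψ (x - y) * (al * Real.exp (-al * y))
            - ψ' x * (Φ (x - y) * (al * Real.exp (-al * y))) := by
      funext y; ring
    rw [hfun, intervalIntegral.integral_sub hintψ (hintΦ.const_mul _),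
      intervalIntegral.integral_const_mul]
  have hmono2 : (∫ y in (0:ℝ)..x, (ψ x - ψ' x * Φ x) * (al * Real.exp (-al * y)))
      ≤ ∫ y in (0:ℝ)..x, (ψ (x - y) - ψ' x * Φ (x - y)) * (al * Real.exp (-al * y)) := by
    apply intervalIntegral.integral_mono_on hx0.le
      ((by fun_prop : Continuous fun y : ℝ => (ψ x - ψ' x * Φ x) * (al * Real.exp (-al * y))).intervalIntegrable 0 x)
      (by rw [show (fun y => (ψ (x - y) - ψ' x * Φ (x - y)) * (al * Real.exp (-al * y)))
            = fun y => ψ (x - y) * (al * Real.exp (-al * y))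
                - ψ' x * (Φ (x - y) * (al * Real.exp (-al * y))) from by funext y; ring]
          exact hintψ.sub (hintΦ.const_mul _))
    intro y hy
    have hpos : 0 ≤ al * Real.exp (-al * y) := by positivity
    exact mul_le_mul_of_nonneg_right (hcore (x - y) (by linarith [hy.2]) (by linarith [hy.1])) hpos
  have heval : (∫ y in (0:ℝ)..x, (ψ x - ψ' x * Φ x) * (al * Real.exp (-al * y)))
      = (ψ x - ψ' x * Φ x) * (1 - Real.exp (-al * x)) := by
    rw [intervalIntegral.integral_const_mul, exp_integral]
  have hW2 : ψ x - ψ' x * Φ x ≤ (ψ x - ψ' x * Φ x) * (1 - Real.exp (-al * x)) := by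
    nlinarith [Real.exp_pos (-al * x), hWneg]
  have hJI : ψ x - ψ' x * Φ x ≤ J - ψ' x * I := by
    rw [hsub]; linarith
  -- combine
  have heqx := hψeq x hx0
  rw [← hJ_def] at heqx
  have h1 : lam * (ψ x - ψ' x * Φ x) ≤ lam * (J - ψ' x * I) :=
    mul_le_mul_of_nonneg_left hJI hlam.le
  have h2 : del * (ψ x - ψ' x * Φ x) ≤ 0 := mul_nonpos_of_nonneg_of_nonpos hdel.le hWneg
  have key : ψ' x * (g x * 1 - (lam + del) * Φ x + lam * I) ≤ ψ' x * 0 := by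
    rw [mul_zero]
    nlinarith [heqx, h1, h2]
  exact le_of_mul_le_mul_left key hp
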